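/- Let A be a Banach algebra whose weak left topological center Z̃₁ˡ(A**) equals (the canonical image of) A. Then A is a right ideal in A** with respect to the first Arens product. -/

import Mathlib

open NormedSpace ContinuousLinearMap

set_option maxSynthPendingDepth 2

noncomputable section

section Core

variable (X Y Z : Type*)
  [NormedAddCommGroup X] [NormedSpace ℝ X]
  [NormedAddCommGroup Y] [NormedSpace ℝ Y]
  [NormedAddCommGroup Z] [NormedSpace ℝ Z]

/-- The dual (adjoint) map of a continuous linear map. -/
def dualMapCLM (T : X →L[ℝ] Y) : StrongDual ℝ Y →L[ℝ] StrongDual ℝ X :=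
  (ContinuousLinearMap.compSL X Y ℝ (RingHom.id ℝ) (RingHom.id ℝ)).flip T

variable {X Y Z}

/-- The adjoint of a continuous bilinear map `m : X × Y → Z`, as a bilinear map
`Z* × X → Y*`, `⟨adjBil m z' x, y⟩ = ⟨z', m x y⟩`. -/
def adjBil (m : X →L[ℝ] Y →L[ℝ] Z) : StrongDual ℝ Z →L[ℝ] X →L[ℝ] StrongDual ℝ Y :=
  ((ContinuousLinearMap.compSL X (Y →L[ℝ] Z) (StrongDual ℝ Y) (RingHom.id ℝ) (RingHom.id ℝ)).flip m).comp
    (ContinuousLinearMap.compSL Y Z ℝ (RingHom.id ℝ) (RingHom.id ℝ))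

/-- The first Arens extension of a continuous bilinear map `X × Y → Z`
to the biduals, `X** × Y** → Z**`. -/
def arensExt (m : X →L[ℝ] Y →L[ℝ] Z) :
    StrongDual ℝ (StrongDual ℝ X) →L[ℝ] StrongDual ℝ (StrongDual ℝ Y) →L[ℝ] StrongDual ℝ (StrongDual ℝ Z) :=
  adjBil (adjBil (adjBil m))

variable (E : Type*) [NormedAddCommGroup E] [NormedSpace ℝ E]

/-- The weak-* topology on the bidual `E**`, i.e. the topology of pointwise
convergence on `E*`. -/
def weakStarTop : TopologicalSpace (StrongDual ℝ (StrongDual ℝ E)) :=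
  ⨅ f : StrongDual ℝ E, TopologicalSpace.induced (fun F => F f) inferInstance

/-- The weak topology on the bidual `E**`, i.e. the topology of pointwise
convergence on `E***`. -/
def weakTop : TopologicalSpace (StrongDual ℝ (StrongDual ℝ E)) :=
  ⨅ Φ : StrongDual ℝ (StrongDual ℝ (StrongDual ℝ E)), TopologicalSpace.induced (fun F => Φ F) inferInstance

end Core

section Algebra

variable (A : Type*) [NonUnitalNormedRing A] [NormedSpace ℝ A]
  [IsScalarTower ℝ A A] [SMulCommClass ℝ A A]

/-- The first Arens product on the bidual of a Banach algebra. -/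
def arens1 : StrongDual ℝ (StrongDual ℝ A) →L[ℝ] StrongDual ℝ (StrongDual ℝ A) →L[ℝ] StrongDual ℝ (StrongDual ℝ A) :=
  arensExt (ContinuousLinearMap.mul ℝ A)

/-- The second Arens product on the bidual of a Banach algebra. -/
def arens2 (F G : StrongDual ℝ (StrongDual ℝ A)) : StrongDual ℝ (StrongDual ℝ A) :=
  arensExt ((ContinuousLinearMap.mul ℝ A).flip) G F

/-- The weak left topological center of `A**`: those `F` such that
`G ↦ F □ G` is weak-*-to-weak continuous. -/
def weakLeftCenter : Set (StrongDual ℝ (StrongDual ℝ A)) :=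
  { F | ∀ Φ : StrongDual ℝ (StrongDual ℝ (StrongDual ℝ A)),
      @Continuous _ _ (weakStarTop A) _ fun G => Φ (arens1 A F G) }

/-- The left topological center of `A**`: those `F` such that
`G ↦ F □ G` is weak-*-to-weak-* continuous. -/
def leftCenter : Set (StrongDual ℝ (StrongDual ℝ A)) :=
  { F | ∀ f : StrongDual ℝ A,
      @Continuous _ _ (weakStarTop A) _ fun G => arens1 A F G f }

end Algebra


section Helper

open Filter Set

variable (E : Type*) [NormedAddCommGroup E] [NormedSpace ℝ E]

/-- A linear functional on `E**` which is continuous for the weak-* topology is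
evaluation at some element of `E*`. -/
lemma weakStar_continuous_eval_repr (φ : StrongDual ℝ (StrongDual ℝ E) →ₗ[ℝ] ℝ)
    (hφ : @Continuous _ _ (weakStarTop E) _ φ) :
    ∃ f : StrongDual ℝ E, ∀ G, φ G = G f := by
  classical
  let toLin : StrongDual ℝ E →ₗ[ℝ] (StrongDual ℝ (StrongDual ℝ E) →ₗ[ℝ] ℝ) :=
    (ContinuousLinearMap.coeLM ℝ).comp (inclusionInDoubleDual ℝ (StrongDual ℝ E)).toLinearMap
  have h0 : φ ⁻¹' Set.Ioo (-1 : ℝ) 1 ∈ @nhds _ (weakStarTop E) 0 := by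
    have hca : @ContinuousAt _ _ (weakStarTop E) _ φ 0 :=
      @Continuous.continuousAt _ _ (weakStarTop E) _ _ _ hφ
    refine hca ?_
    rw [map_zero]
    exact Ioo_mem_nhds (by norm_num) one_pos
  rw [weakStarTop, _root_.nhds_iInf] at h0
  simp only [nhds_induced] at h0
  obtain ⟨I, hIfin, V, hVmem, hVuniv, -, hUV⟩ := Filter.mem_iInf'.1 h0
  have : Finite I := hIfin
  have hker : (⨅ i : I, LinearMap.ker (toLin i.1)) ≤ LinearMap.ker φ := by
    intro G hG
    simp only [Submodule.mem_iInf, LinearMap.mem_ker] at hG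
    have key : ∀ t : ℝ, 0 < t → t * |φ G| < 1 := by
      intro t ht
      have hmem : (t • G) ∈ ⋂ g, V g := by
        refine Set.mem_iInter.2 fun g => ?_
        by_cases hg : g ∈ I
        · obtain ⟨U, hU, hUsub⟩ := Filter.mem_comap.1 (hVmem g)
          refine hUsub ?_
          have hGg : G g = 0 := by
            have h1 := hG ⟨g, hg⟩
            simpa [toLin] using h1
          have hval : (t • G) g = 0 := by simp [hGg]
          simp only [Set.mem_preimage, hval]
          have h00 : ((0 : StrongDual ℝ (StrongDual ℝ E)) : StrongDual ℝ E → ℝ) g = 0 := rfl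
          rw [h00] at hU
          exact mem_of_mem_nhds hU
        · rw [hVuniv g hg]; exact Set.mem_univ _
      have hIoo : φ (t • G) ∈ Set.Ioo (-1 : ℝ) 1 := by
        have := hUV ▸ hmem
        exact this
      rw [map_smul, smul_eq_mul] at hIoo
      have habs : |t * φ G| < 1 := abs_lt.2 ⟨hIoo.1, hIoo.2⟩
      calc t * |φ G| = |t * φ G| := by rw [abs_mul, abs_of_pos ht]
        _ < 1 := habs
    rw [LinearMap.mem_ker]
    by_contra hne
    have hpos : 0 < |φ G| := abs_pos.2 hne
    have := key (|φ G|⁻¹ * 2) (by positivity)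
    rw [show |φ G|⁻¹ * 2 * |φ G| = 2 by field_simp] at this
    linarith
  have hspan : φ ∈ Submodule.span ℝ (Set.range fun i : I => toLin i.1) :=
    mem_span_of_iInf_ker_le_ker hker
  have hle : Submodule.span ℝ (Set.range fun i : I => toLin i.1) ≤ LinearMap.range toLin := by
    rw [Submodule.span_le]
    rintro _ ⟨i, rfl⟩
    exact ⟨i.1, rfl⟩
  obtain ⟨f, rfl⟩ := hle hspan
  exact ⟨f, fun G => rfl⟩

end Helper


/-- If the weak left topological center of `A**` equals the canonical
image of `A`, then `A` is a right ideal in `A**` (first Arens product). -/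
theorem stmt1 (A : Type*) [NonUnitalNormedRing A] [NormedSpace ℝ A]
    [IsScalarTower ℝ A A] [SMulCommClass ℝ A A] [CompleteSpace A]
    (h : weakLeftCenter A = Set.range (inclusionInDoubleDual ℝ A)) :
    ∀ (a : A) (F : StrongDual ℝ (StrongDual ℝ A)),
      arens1 A (inclusionInDoubleDual ℝ A a) F ∈ Set.range (inclusionInDoubleDual ℝ A) := by
  intro a F
  by_contra hmem
  set j := inclusionInDoubleDual ℝ A with hj
  have hclosed : IsClosed (Set.range j) := by
    have h1 : Isometry ⇑j := (inclusionInDoubleDualLi ℝ (E := A)).isometry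
    exact h1.isClosedEmbedding.isClosed_range
  have hconvex : Convex ℝ (Set.range j) := by
    rw [← Set.image_univ]
    exact convex_univ.linear_image j.toLinearMap
  obtain ⟨l, u, hl, hu⟩ := geometric_hahn_banach_closed_point hconvex hclosed hmem
  have hl0 : ∀ b : A, l (j b) = 0 := by
    intro b
    by_contra hb
    have h1 : ∀ t : ℝ, t * l (j b) < u := by
      intro t
      have := hl (j (t • b)) ⟨t • b, rfl⟩
      rwa [map_smul, map_smul, smul_eq_mul] at this
    have h2 := h1 ((u + 1) / l (j b))
    rw [div_mul_cancel₀ _ hb] at h2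
    linarith
  have hupos : 0 < u := by
    have := hl (j 0) ⟨0, rfl⟩
    rw [map_zero, map_zero] at this
    exact this
  have ha : (j a) ∈ weakLeftCenter A := by
    rw [h]; exact ⟨a, rfl⟩
  have hcont : @Continuous _ _ (weakStarTop A) _
      fun G => ((l.comp (arens1 A (j a))).toLinearMap : StrongDual ℝ (StrongDual ℝ A) →ₗ[ℝ] ℝ) G := ha l
  obtain ⟨f, hf⟩ := weakStar_continuous_eval_repr A (l.comp (arens1 A (j a))).toLinearMap hcont
  have harr : ∀ b : A, arens1 A (j a) (j b) = j (a * b) := by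
    intro b
    ext g
    rfl
  have hfzero : f = 0 := by
    ext b
    have h2 := hf (j b)
    have h6 : ((l.comp (arens1 A (j a))).toLinearMap : StrongDual ℝ (StrongDual ℝ A) →ₗ[ℝ] ℝ) (j b)
        = l (arens1 A (j a) (j b)) := rfl
    rw [h6, harr b, hl0 (a * b)] at h2
    have h3 : f b = 0 := h2.symm
    simpa using h3
  have h8 : l (arens1 A (j a) F) = 0 := by
    have h7 := hf F
    rw [hfzero, map_zero] at h7
    exact h7
  linarith


end
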